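/- Let A be an n×n real symmetric matrix with nonnegative entries such that no row of A is zero, and let a⋆ = min{a_ij : a_ij > 0}. Suppose q : [0,ζ) → Mat_n(ℝ≥0) solves the ODE q' = 2 q A q with nonnegative initial data q(0). If a_ij > 0, then for all t ∈ [0,ζ) we have q(t)_{ij} ≥ q(0)_{ij} / (1 − 2 t a⋆ q(0)_{ij}) whenever 1 − 2 t a⋆ q(0)_{ij} > 0; in particular the maximal time of existence satisfies ζ ≤ 1/(2 a⋆ q(0)_{ij}). -/

import Mathlib

open Set

private lemma mono_aux {ζ : ℝ} {f d : ℝ → ℝ}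
    (hf : ∀ t ∈ Ico (0:ℝ) ζ, HasDerivAt f (d t) t)
    (hd : ∀ t ∈ Ico (0:ℝ) ζ, 0 ≤ d t) : MonotoneOn f (Ico (0:ℝ) ζ) := by
  intro s hs t ht hst
  have hsub : Icc s t ⊆ Ico (0:ℝ) ζ := fun x hx => ⟨le_trans hs.1 hx.1, lt_of_le_of_lt hx.2 ht.2⟩
  have hmono := monotoneOn_of_deriv_nonneg (convex_Icc s t)
    (fun x hx => (hf x (hsub hx)).continuousAt.continuousWithinAt)
    (fun x hx => ((hf x (hsub (interior_subset hx))).differentiableAt).differentiableWithinAt)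
    (fun x hx => by
      rw [(hf x (hsub (interior_subset hx))).deriv]
      exact hd x (hsub (interior_subset hx)))
  exact hmono (left_mem_Icc.2 hst) (right_mem_Icc.2 hst) hst

private lemma anti_aux {ζ : ℝ} {f d : ℝ → ℝ}
    (hf : ∀ t ∈ Ico (0:ℝ) ζ, HasDerivAt f (d t) t)
    (hd : ∀ t ∈ Ico (0:ℝ) ζ, d t ≤ 0) : AntitoneOn f (Ico (0:ℝ) ζ) := by
  have := mono_aux (f := fun t => -f t) (d := fun t => -d t)
    (fun t ht => (hf t ht).neg) (fun t ht => by simpa using hd t ht)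
  intro s hs t ht hst
  have h := this hs ht hst
  simpa using h

/-- Lower bound for solutions of `q' = 2 q A q` and the resulting bound
on the time of existence. -/
theorem stmt0 {n : ℕ} (A : Matrix (Fin n) (Fin n) ℝ)
    (hAsymm : A.IsSymm) (hAnonneg : ∀ i j, 0 ≤ A i j)
    (hArow : ∀ i, ∃ j, 0 < A i j)
    (astar : ℝ)
    (hastar_le : ∀ i j, 0 < A i j → astar ≤ A i j)
    (hastar_mem : ∃ i j, 0 < A i j ∧ A i j = astar)
    (ζ : ℝ) (hζ : 0 < ζ)
    (q : ℝ → Matrix (Fin n) (Fin n) ℝ)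
    (hq_nonneg : ∀ t ∈ Ico (0:ℝ) ζ, ∀ k l, 0 ≤ q t k l)
    (hq_ode : ∀ t ∈ Ico (0:ℝ) ζ, ∀ k l,
      HasDerivAt (fun s => q s k l) (2 * ((q t * A * q t) k l)) t)
    (i j : Fin n) (hij : 0 < A i j) :
    (∀ t ∈ Ico (0:ℝ) ζ, 0 < 1 - 2 * t * astar * q 0 i j →
      q 0 i j / (1 - 2 * t * astar * q 0 i j) ≤ q t i j) ∧
    ζ * (2 * astar * q 0 i j) ≤ 1 := by
  obtain ⟨i0, j0, hpos0, heq0⟩ := hastar_mem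
  have ha : 0 < astar := heq0 ▸ hpos0
  set f : ℝ → ℝ := fun t => q t i j with hfdef
  set d : ℝ → ℝ := fun t => 2 * ((q t * A * q t) i j) with hddef
  have hf : ∀ t ∈ Ico (0:ℝ) ζ, HasDerivAt f (d t) t := fun t ht => hq_ode t ht i j
  have h0mem : (0:ℝ) ∈ Ico (0:ℝ) ζ := ⟨le_refl _, hζ⟩
  have hAij : astar ≤ A i j := hastar_le i j hij
  have hAji : astar ≤ A j i := by rw [hAsymm.apply i j]; exact hAij
  -- key lower bound on the derivative
  have hdlb : ∀ t ∈ Ico (0:ℝ) ζ, 2 * astar * (f t)^2 ≤ d t := by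
    intro t ht
    have qn := hq_nonneg t ht
    have hexp : (q t * A * q t) i j
        = ∑ k, (∑ l, q t i l * A l k) * q t k j := by
      simp [Matrix.mul_apply]
    have h1 : astar * q t i j ≤ ∑ l, q t i l * A l i := by
      have hterm := Finset.single_le_sum (f := fun l => q t i l * A l i)
        (fun l _ => mul_nonneg (qn i l) (hAnonneg l i)) (Finset.mem_univ j)
      have hterm' : q t i j * A j i ≤ ∑ l, q t i l * A l i := hterm
      have : astar * q t i j ≤ q t i j * A j i := by
        nlinarith [qn i j]
      linarith
    have h2 : (astar * q t i j) * q t i j ≤ (∑ l, q t i l * A l i) * q t i j :=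
      mul_le_mul_of_nonneg_right h1 (qn i j)
    have h3 : (∑ l, q t i l * A l i) * q t i j
        ≤ ∑ k, (∑ l, q t i l * A l k) * q t k j := by
      exact Finset.single_le_sum (f := fun k => (∑ l, q t i l * A l k) * q t k j)
        (fun k _ => mul_nonneg
          (Finset.sum_nonneg fun l _ => mul_nonneg (qn i l) (hAnonneg l k)) (qn k j))
        (Finset.mem_univ i)
    have : astar * (f t)^2 ≤ (q t * A * q t) i j := by
      rw [hexp]
      have : (f t)^2 = q t i j * q t i j := by simp [hfdef]; ring
      nlinarith
    simp only [hddef]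
    linarith
  have hd0 : ∀ t ∈ Ico (0:ℝ) ζ, 0 ≤ d t := by
    intro t ht
    have := hdlb t ht
    nlinarith [sq_nonneg (f t)]
  have hmono : MonotoneOn f (Ico (0:ℝ) ζ) := mono_aux hf hd0
  by_cases hq0 : q 0 i j = 0
  · constructor
    · intro t ht hden
      rw [hq0, zero_div]
      exact hq_nonneg t ht i j
    · rw [hq0]; norm_num
  · have hq0pos : 0 < q 0 i j := lt_of_le_of_ne (hq_nonneg 0 h0mem i j) (Ne.symm hq0)
    have hfpos : ∀ t ∈ Ico (0:ℝ) ζ, 0 < f t := fun t ht =>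
      lt_of_lt_of_le hq0pos (hmono h0mem ht ht.1)
    set u : ℝ → ℝ := fun t => (f t)⁻¹ + 2 * astar * t with hudef
    have hu : ∀ t ∈ Ico (0:ℝ) ζ, HasDerivAt u (-(d t) / (f t)^2 + 2 * astar) t := by
      intro t ht
      have h1 := (hf t ht).inv (ne_of_gt (hfpos t ht))
      have h2 : HasDerivAt (fun s : ℝ => 2 * astar * s) (2 * astar) t := by
        simpa using (hasDerivAt_id t).const_mul (2 * astar)
      exact h1.add h2
    have hu' : ∀ t ∈ Ico (0:ℝ) ζ, -(d t) / (f t)^2 + 2 * astar ≤ 0 := by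
      intro t ht
      have hsq : 0 < (f t)^2 := pow_pos (hfpos t ht) 2
      have hle : 2 * astar ≤ d t / (f t)^2 := (le_div_iff₀ hsq).2 (by linarith [hdlb t ht])
      rw [neg_div]
      linarith
    have hanti : AntitoneOn u (Ico (0:ℝ) ζ) := anti_aux hu hu'
    have hkey : ∀ t ∈ Ico (0:ℝ) ζ, (f t)⁻¹ ≤ (q 0 i j)⁻¹ - 2 * astar * t := by
      intro t ht
      have h := hanti h0mem ht ht.1
      simp only [hudef, hfdef, mul_zero, add_zero] at h
      linarith
    constructor
    · intro t ht hden
      have h1 := hkey t ht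
      have hft := hfpos t ht
      have heq : (1 - 2 * t * astar * q 0 i j) / (q 0 i j) = (q 0 i j)⁻¹ - 2 * astar * t := by
        field_simp
      have h2 : (f t)⁻¹ ≤ (1 - 2 * t * astar * q 0 i j) / (q 0 i j) := by rw [heq]; exact h1
      rw [← one_div, div_le_div_iff₀ hft hq0pos] at h2
      rw [div_le_iff₀ hden]
      nlinarith [h2]
    · by_contra hcon
      push_neg at hcon
      set c : ℝ := 2 * astar * q 0 i j with hcdef
      have hc : 0 < c := by positivity
      have ht0 : (1/c) ∈ Ico (0:ℝ) ζ := ⟨by positivity, (div_lt_iff₀ hc).2 (by linarith)⟩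
      have h1 := hkey (1/c) ht0
      have hft := hfpos (1/c) ht0
      have heq : (q 0 i j)⁻¹ - 2 * astar * (1/c) = 0 := by
        rw [hcdef]
        field_simp
        ring
      have hinv : 0 < (f (1/c))⁻¹ := inv_pos.2 hft
      linarith
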